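/- Every graph G has a minimum mixed dominating set S such that no vertex in S ∩ V is an endpoint of an edge in S ∩ E. -/

import Mathlib

open SimpleGraph

/-- The ground set of a graph: all vertices and all edges, as elements of `V ⊕ Sym2 V`. -/
def Ground {V : Type*} (G : SimpleGraph V) : Set (V ⊕ Sym2 V) :=
  Set.range Sum.inl ∪ Sum.inr '' G.edgeSet

/-- Mixed domination relation: `MixedDom G s x` means element `s` dominates element `x`:
a vertex dominates its neighbors and incident edges; an edge dominates its endpoints and
adjacent edges. -/
def MixedDom {V : Type*} (G : SimpleGraph V) : (V ⊕ Sym2 V) → (V ⊕ Sym2 V) → Prop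
  | Sum.inl v, Sum.inl u => G.Adj v u
  | Sum.inl v, Sum.inr e => e ∈ G.edgeSet ∧ v ∈ e
  | Sum.inr e, Sum.inl v => e ∈ G.edgeSet ∧ v ∈ e
  | Sum.inr e, Sum.inr f => e ∈ G.edgeSet ∧ f ∈ G.edgeSet ∧ e ≠ f ∧ ∃ v, v ∈ e ∧ v ∈ f

/-- `S` is a mixed dominating set of `G`: `S ⊆ V ∪ E` and every element of
`(V ∪ E) \ S` is dominated by an element of `S`. -/
def IsMDS {V : Type*} (G : SimpleGraph V) (S : Set (V ⊕ Sym2 V)) : Prop :=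
  S ⊆ Ground G ∧ ∀ x ∈ Ground G \ S, ∃ s ∈ S, MixedDom G s x

/-- The mixed domination number: minimum cardinality of a mixed dominating set. -/
noncomputable def gammaM {V : Type*} (G : SimpleGraph V) : ℕ :=
  sInf {n | ∃ S : Set (V ⊕ Sym2 V), IsMDS G S ∧ S.ncard = n}

lemma ground_mds {V : Type*} (G : SimpleGraph V) : IsMDS G (Ground G) :=
  ⟨subset_rfl, fun x hx => absurd hx.1 hx.2⟩

lemma exists_min_mds {V : Type*} (G : SimpleGraph V) :
    ∃ S : Set (V ⊕ Sym2 V), IsMDS G S ∧ S.ncard = gammaM G := by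
  have hne : {n | ∃ S : Set (V ⊕ Sym2 V), IsMDS G S ∧ S.ncard = n}.Nonempty :=
    ⟨(Ground G).ncard, Ground G, ground_mds G, rfl⟩
  have := Nat.sInf_mem hne
  obtain ⟨S, hS, hc⟩ := this
  exact ⟨S, hS, hc⟩

/-- The key exchange step: if a minimum MDS contains a vertex `v` and an edge `e ∋ v`,
we can replace `e` by its other endpoint, keeping a minimum MDS with fewer edges. -/
lemma exchange {V : Type*} [Fintype V] [DecidableEq V] (G : SimpleGraph V)
    (S : Set (V ⊕ Sym2 V)) (hS : IsMDS G S) (v : V) (e : Sym2 V)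
    (hv : Sum.inl v ∈ S) (he : Sum.inr e ∈ S) (hve : v ∈ e) :
    ∃ S' : Set (V ⊕ Sym2 V), IsMDS G S' ∧ S'.ncard ≤ S.ncard ∧
      (S' ∩ Set.range Sum.inr).ncard < (S ∩ Set.range Sum.inr).ncard := by
  classical
  have heE : e ∈ G.edgeSet := by
    rcases hS.1 he with h | ⟨f, hf, hfe⟩
    · obtain ⟨u, hu⟩ := h; exact absurd hu (by simp)
    · rw [← Sum.inr.inj hfe]; exact hf
  set w := Sym2.Mem.other hve with hw
  have hspec : s(v, w) = e := Sym2.other_spec hve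
  have hwe : w ∈ e := hspec ▸ Sym2.mem_mk_right v w
  set S' : Set (V ⊕ Sym2 V) := insert (Sum.inl w) (S \ {Sum.inr e}) with hS'def
  have hSfin : S.Finite := Set.toFinite _
  have hS'fin : S'.Finite := Set.toFinite _
  have hmem_cases : ∀ u : V, u ∈ e → u = v ∨ u = w := by
    intro u hu
    rw [← hspec] at hu
    simpa using hu
  have hvS' : Sum.inl v ∈ S' := Or.inr ⟨hv, by simp⟩
  have hwS' : Sum.inl w ∈ S' := Or.inl rfl
  refine ⟨S', ⟨?_, ?_⟩, ?_, ?_⟩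
  · -- subset of ground
    intro x hx
    rcases hx with rfl | ⟨hxS, _⟩
    · exact Or.inl ⟨w, rfl⟩
    · exact hS.1 hxS
  · -- domination
    intro x hx
    obtain ⟨hxG, hxS'⟩ := hx
    by_cases hxe : x = Sum.inr e
    · exact ⟨Sum.inl v, hvS', by rw [hxe]; exact ⟨heE, hve⟩⟩
    by_cases hxS : x ∈ S
    · exact absurd (Or.inr ⟨hxS, by simpa using hxe⟩) hxS'
    obtain ⟨s, hsS, hsd⟩ := hS.2 x ⟨hxG, hxS⟩
    by_cases hse : s = Sum.inr e
    · subst hse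
      -- e dominates x; x is an endpoint of e or an adjacent edge
      match x, hsd with
      | Sum.inl u, ⟨_, hu⟩ =>
          rcases hmem_cases u hu with h | h
          · rw [h] at hxS; exact absurd hv hxS
          · rw [h] at hxS'; exact absurd hwS' hxS'
      | Sum.inr f, ⟨_, hfE, _, u, hue, huf⟩ =>
          rcases hmem_cases u hue with h | h
          · exact ⟨Sum.inl v, hvS', ⟨hfE, h ▸ huf⟩⟩
          · exact ⟨Sum.inl w, hwS', ⟨hfE, h ▸ huf⟩⟩
    · exact ⟨s, Or.inr ⟨hsS, by simpa using hse⟩, hsd⟩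
  · -- cardinality
    calc S'.ncard ≤ (S \ {Sum.inr e}).ncard + 1 :=
          Set.ncard_insert_le _ _
      _ = S.ncard - 1 + 1 := by
          rw [Set.ncard_diff_singleton_of_mem he]
      _ ≤ S.ncard := by
          have : 0 < S.ncard := (Set.ncard_pos hSfin).mpr ⟨_, he⟩
          omega
  · -- edge count decreases
    have hsub : S' ∩ Set.range Sum.inr ⊆ (S ∩ Set.range Sum.inr) \ {Sum.inr e} := by
      rintro x ⟨hx1, hx2⟩
      rcases hx1 with rfl | ⟨hxS, hxne⟩
      · obtain ⟨f, hf⟩ := hx2; exact absurd hf (by simp)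
      · exact ⟨⟨hxS, hx2⟩, hxne⟩
    calc (S' ∩ Set.range Sum.inr).ncard
        ≤ ((S ∩ Set.range Sum.inr) \ {Sum.inr e}).ncard :=
          Set.ncard_le_ncard hsub (Set.toFinite _)
      _ < (S ∩ Set.range Sum.inr).ncard := by
          exact Set.ncard_diff_singleton_lt_of_mem
            (show Sum.inr e ∈ S ∩ Set.range Sum.inr from ⟨he, e, rfl⟩) (Set.toFinite _)

/-- Every graph has a minimum mixed dominating set in which no chosen vertex is an
endpoint of a chosen edge. -/
theorem stmt_15 {V : Type*} [Fintype V] [DecidableEq V] (G : SimpleGraph V) :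
    ∃ S : Set (V ⊕ Sym2 V), IsMDS G S ∧ S.ncard = gammaM G ∧
      ∀ (v : V) (e : Sym2 V), Sum.inl v ∈ S → Sum.inr e ∈ S → v ∉ e := by
  classical
  set T : Set ℕ := {n | ∃ S : Set (V ⊕ Sym2 V), IsMDS G S ∧ S.ncard = gammaM G ∧
    (S ∩ Set.range Sum.inr).ncard = n} with hT
  have hTne : T.Nonempty := by
    obtain ⟨S, hS, hc⟩ := exists_min_mds G
    exact ⟨_, S, hS, hc, rfl⟩
  obtain ⟨S, hS, hc, hcount⟩ := Nat.sInf_mem hTne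
  refine ⟨S, hS, hc, ?_⟩
  intro v e hv he hve
  obtain ⟨S', hS', hle, hlt⟩ := exchange G S hS v e hv he hve
  have hS'card : S'.ncard = gammaM G := by
    have h1 : gammaM G ≤ S'.ncard := Nat.sInf_le ⟨S', hS', rfl⟩
    omega
  have : (S' ∩ Set.range Sum.inr).ncard ∈ T := ⟨S', hS', hS'card, rfl⟩
  have := Nat.sInf_le this
  omega
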